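/- Spearman's rho of the copula C(u,v) = uv + δ·(1 - exp(α(u-u²)))·(1 - exp(α(v-v²))), defined as ρ = 12·∫₀¹∫₀¹ C(u,v) du dv - 3, equals 12δ·(∫₀¹ (1 - exp(α(u-u²))) du)², i.e., for α > 0, ρ = 12δ·[1 - √(π/α)·exp(α/4)·erf(√α/2)]². -/

import Mathlib

theorem stmt_17 (α δ : ℝ) (hα : α > 0) (C : ℝ → ℝ → ℝ)
    (hC : ∀ u v, C u v = u*v + δ * (1 - Real.exp (α * (u - u^2))) * (1 - Real.exp (α * (v - v^2))))
    (erf : ℝ → ℝ)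
    (herf : ∀ t, erf t = (2 / Real.sqrt Real.pi) * ∫ z in (0:ℝ)..t, Real.exp (-z^2)) :
    12 * (∫ u in (0:ℝ)..1, ∫ v in (0:ℝ)..1, C u v) - 3 =
      12 * δ * (∫ u in (0:ℝ)..1, (1 - Real.exp (α * (u - u^2))))^2 ∧
    12 * (∫ u in (0:ℝ)..1, ∫ v in (0:ℝ)..1, C u v) - 3 =
      12 * δ * (1 - Real.sqrt (Real.pi / α) * Real.exp (α/4) * erf (Real.sqrt α / 2))^2 := by
  have hEcont : Continuous (fun u : ℝ => 1 - Real.exp (α * (u - u^2))) := by continuity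
  set I : ℝ := ∫ u in (0:ℝ)..1, (1 - Real.exp (α * (u - u^2))) with hIdef
  -- inner integral
  have hinner : ∀ u : ℝ, (∫ v in (0:ℝ)..1, C u v)
      = u / 2 + δ * (1 - Real.exp (α * (u - u^2))) * I := by
    intro u
    have h1 : (∫ v in (0:ℝ)..1, C u v)
        = (∫ v in (0:ℝ)..1, u * v) + ∫ v in (0:ℝ)..1,
            δ * (1 - Real.exp (α * (u - u^2))) * (1 - Real.exp (α * (v - v^2))) := by
      simp only [hC]
      exact intervalIntegral.integral_add
        ((continuous_const.mul continuous_id).intervalIntegrable 0 1)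
        ((continuous_const.mul hEcont).intervalIntegrable 0 1)
    rw [h1, intervalIntegral.integral_const_mul, intervalIntegral.integral_const_mul,
      integral_id, ← hIdef]
    ring
  have houter : (∫ u in (0:ℝ)..1, ∫ v in (0:ℝ)..1, C u v) = 1/4 + δ * I * I := by
    have h2 : (∫ u in (0:ℝ)..1, ∫ v in (0:ℝ)..1, C u v)
        = ∫ u in (0:ℝ)..1, (u / 2 + (δ * I) * (1 - Real.exp (α * (u - u^2)))) := by
      apply intervalIntegral.integral_congr
      intro u _
      simp only [hinner u]
      ring
    rw [h2, intervalIntegral.integral_add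
        ((by fun_prop : Continuous fun u : ℝ => u / 2).intervalIntegrable 0 1)
        ((by fun_prop : Continuous fun u : ℝ => δ * I * (1 - Real.exp (α * (u - u^2)))).intervalIntegrable 0 1),
      intervalIntegral.integral_const_mul]
    have h3 : (∫ u in (0:ℝ)..1, u / 2) = 1/4 := by
      simp only [div_eq_mul_inv]
      rw [intervalIntegral.integral_mul_const, integral_id]
      norm_num
    rw [h3, ← hIdef]
  have hfirst : 12 * (∫ u in (0:ℝ)..1, ∫ v in (0:ℝ)..1, C u v) - 3 = 12 * δ * I^2 := by
    rw [houter]; ring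
  refine ⟨hfirst, ?_⟩
  -- now show I = 1 - √(π/α) e^{α/4} erf(√α/2)
  set s : ℝ := Real.sqrt α with hsdef
  have hs : 0 < s := Real.sqrt_pos.mpr hα
  have hs2 : s^2 = α := Real.sq_sqrt hα.le
  set K : ℝ := ∫ z in (0:ℝ)..(s/2), Real.exp (-z^2) with hKdef
  have hJ : (∫ u in (0:ℝ)..1, Real.exp (α * (u - u^2)))
      = Real.exp (α/4) * (s⁻¹ * (2 * K)) := by
    have hpt : ∀ u : ℝ, Real.exp (α * (u - u^2))
        = Real.exp (α/4) * Real.exp (-(s * (u - 1/2))^2) := by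
      intro u
      rw [← Real.exp_add]
      congr 1
      nlinarith [hs2]
    have h3 : (∫ u in (0:ℝ)..1, Real.exp (α * (u - u^2)))
        = Real.exp (α/4) * ∫ u in (0:ℝ)..1, Real.exp (-(s * (u - 1/2))^2) := by
      rw [← intervalIntegral.integral_const_mul]
      exact intervalIntegral.integral_congr fun u _ => hpt u
    rw [h3]
    congr 1
    have h4 : (∫ u in (0:ℝ)..1, Real.exp (-(s * (u - 1/2))^2))
        = ∫ x in (0 - 1/2 : ℝ)..(1 - 1/2), Real.exp (-(s * x)^2) :=
      intervalIntegral.integral_comp_sub_right (fun x => Real.exp (-(s * x)^2)) (1/2)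
    have h5 : (∫ x in (-(1/2) : ℝ)..(1/2), Real.exp (-(s * x)^2))
        = s⁻¹ • ∫ x in (s * -(1/2))..(s * (1/2)), Real.exp (-x^2) :=
      intervalIntegral.integral_comp_mul_left (fun x => Real.exp (-x^2)) hs.ne'
    have h6 : (∫ x in (-(s/2) : ℝ)..(s/2), Real.exp (-x^2)) = 2 * K := by
      have hint : ∀ a b : ℝ, IntervalIntegrable (fun x : ℝ => Real.exp (-x^2)) MeasureTheory.volume a b :=
        fun a b => (by fun_prop : Continuous fun x : ℝ => Real.exp (-x^2)).intervalIntegrable a b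
      have hneg : (∫ x in (-(s/2) : ℝ)..(0:ℝ), Real.exp (-x^2)) = K := by
        have h7 := intervalIntegral.integral_comp_neg (a := (0:ℝ)) (b := s/2) (fun x => Real.exp (-x^2))
        simp only [neg_sq, neg_zero] at h7
        rw [hKdef, ← h7]
      calc (∫ x in (-(s/2) : ℝ)..(s/2), Real.exp (-x^2))
          = (∫ x in (-(s/2) : ℝ)..(0:ℝ), Real.exp (-x^2))
            + ∫ x in (0:ℝ)..(s/2), Real.exp (-x^2) :=
            (intervalIntegral.integral_add_adjacent_intervals (hint _ _) (hint _ _)).symm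
        _ = 2 * K := by rw [hneg, ← hKdef]; ring
    rw [h4, show (0 - 1/2 : ℝ) = -(1/2) by norm_num,
      show (1 - 1/2 : ℝ) = (1/2 : ℝ) by norm_num, h5,
      show s * -(1/2 : ℝ) = -(s/2) by ring, show s * (1/2 : ℝ) = s/2 by ring,
      h6, smul_eq_mul]
  have hI : I = 1 - Real.sqrt (Real.pi / α) * Real.exp (α/4) * erf (s / 2) := by
    have hIsplit : I = 1 - ∫ u in (0:ℝ)..1, Real.exp (α * (u - u^2)) := by
      rw [hIdef, intervalIntegral.integral_sub intervalIntegrable_const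
        ((by fun_prop : Continuous fun u : ℝ => Real.exp (α * (u - u^2))).intervalIntegrable 0 1),
        integral_one]
      norm_num
    rw [hIsplit, hJ, herf]
    have hπ : (0:ℝ) < Real.pi := Real.pi_pos
    have hsπ : Real.sqrt Real.pi > 0 := Real.sqrt_pos.mpr hπ
    have hdiv : Real.sqrt (Real.pi / α) = Real.sqrt Real.pi / s := by
      rw [Real.sqrt_div hπ.le, hsdef]
    rw [hdiv, ← hKdef]
    field_simp
  rw [hfirst, hI]
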